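/- In a right-angled Coxeter group, two reduced words represent the same group element if and only if one can be obtained from the other by a sequence of swaps of adjacent commuting generators. -/

import Mathlib

variable {Γ : Type*}

/-- Two generators commute: they are distinct and non-adjacent in the Coxeter graph. -/
def RACommutes (adj : Γ → Γ → Prop) (γ δ : Γ) : Prop := γ ≠ δ ∧ ¬ adj γ δ

/-- Relations of the right-angled Coxeter group: squares of generators and
commutators of commuting (non-adjacent) pairs. -/
def coxRels (adj : Γ → Γ → Prop) : Set (FreeGroup Γ) :=
  {r | (∃ γ : Γ, r = FreeGroup.of γ * FreeGroup.of γ) ∨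
    (∃ γ δ : Γ, RACommutes adj γ δ ∧
      r = FreeGroup.of γ * FreeGroup.of δ * (FreeGroup.of γ)⁻¹ * (FreeGroup.of δ)⁻¹)}

/-- The element of the right-angled Coxeter group represented by a word. -/
def evalWord (adj : Γ → Γ → Prop) (w : List Γ) : PresentedGroup (coxRels adj) :=
  (w.map (fun γ => (PresentedGroup.of γ : PresentedGroup (coxRels adj)))).prod

/-- One swap of two adjacent commuting generators. -/
def SwapStep (adj : Γ → Γ → Prop) (w w' : List Γ) : Prop :=
  ∃ (u v : List Γ) (γ δ : Γ), RACommutes adj γ δ ∧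
    w = u ++ γ :: δ :: v ∧ w' = u ++ δ :: γ :: v

/-- Permutation of words: a sequence of swaps of adjacent commuting generators. -/
def WordPerm (adj : Γ → Γ → Prop) : List Γ → List Γ → Prop :=
  Relation.ReflTransGen (SwapStep adj)

/-- A word is reduced iff there is no pair of equal letters such that the letter
commutes with every letter strictly in between. -/
def GIsReduced (adj : Γ → Γ → Prop) (w : List Γ) : Prop :=
  ¬ ∃ (u v x : List Γ) (γ : Γ), w = u ++ γ :: (v ++ γ :: x) ∧
      ∀ δ ∈ v, RACommutes adj γ δ

namespace RACG

variable {adj : Γ → Γ → Prop}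

theorem rac_symm (hsym : Symmetric adj) {γ δ : Γ} (h : RACommutes adj γ δ) :
    RACommutes adj δ γ := ⟨h.1.symm, fun a => h.2 (hsym a)⟩

theorem swapStep_symm (hsym : Symmetric adj) {w w' : List Γ} (h : SwapStep adj w w') :
    SwapStep adj w' w := by
  obtain ⟨u, v, γ, δ, hc, h1, h2⟩ := h
  exact ⟨u, v, δ, γ, rac_symm hsym hc, h2, h1⟩

theorem wp_symm (hsym : Symmetric adj) {w w' : List Γ} (h : WordPerm adj w w') :
    WordPerm adj w' w := by
  induction h with
  | refl => exact .refl
  | tail _ hstep ih => exact Relation.ReflTransGen.head (swapStep_symm hsym hstep) ih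

theorem wp_append_left (t : List Γ) {w w' : List Γ} (h : WordPerm adj w w') :
    WordPerm adj (t ++ w) (t ++ w') := by
  refine Relation.ReflTransGen.lift (t ++ ·) (fun a b hab => ?_) _ _ h
  obtain ⟨u, v, γ, δ, hc, h1, h2⟩ := hab
  exact ⟨t ++ u, v, γ, δ, hc, by simp [h1], by simp [h2]⟩

theorem wp_cons (γ : Γ) {w w' : List Γ} (h : WordPerm adj w w') :
    WordPerm adj (γ :: w) (γ :: w') := wp_append_left [γ] h

theorem wp_bubble (hsym : Symmetric adj) {γ : Γ} {v x : List Γ}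
    (h : ∀ δ ∈ v, RACommutes adj γ δ) :
    WordPerm adj (v ++ γ :: x) (γ :: (v ++ x)) := by
  induction v with
  | nil => exact .refl
  | cons δ v' ih =>
    have h1 : WordPerm adj (δ :: (v' ++ γ :: x)) (δ :: γ :: (v' ++ x)) :=
      wp_cons δ (ih (fun e he => h e (List.mem_cons_of_mem _ he)))
    have h2 : SwapStep adj (δ :: γ :: (v' ++ x)) (γ :: δ :: (v' ++ x)) :=
      ⟨[], v' ++ x, δ, γ, rac_symm hsym (h δ List.mem_cons_self), rfl, rfl⟩
    exact h1.trans (Relation.ReflTransGen.single h2)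

theorem wp_of_eq {a b : List Γ} (h : a = b) : WordPerm adj a b := h ▸ .refl

/-- Tracking a marked letter through one swap. -/
theorem track_step (hsym : Symmetric adj) {z z₂ : List Γ} (hs : SwapStep adj z z₂)
    {γ : Γ} {u v : List Γ} (hz : z = u ++ γ :: v) (hu : ∀ δ ∈ u, RACommutes adj γ δ) :
    ∃ u₂ v₂, z₂ = u₂ ++ γ :: v₂ ∧ (∀ δ ∈ u₂, RACommutes adj γ δ) ∧
      WordPerm adj (u ++ v) (u₂ ++ v₂) := by
  obtain ⟨p, q, α, β, hc, h1, h2⟩ := hs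
  rw [hz] at h1
  subst h2
  rcases List.append_eq_append_iff.mp h1 with ⟨t, hpt, heq⟩ | ⟨t, hut, heq⟩
  · -- p = u ++ t, γ :: v = t ++ α :: β :: q
    subst hpt
    cases t with
    | nil =>
      simp only [List.nil_append, List.cons.injEq] at heq
      obtain ⟨hga, rfl⟩ := heq
      refine ⟨u ++ [β], q, by simp [hga], ?_, wp_of_eq (by simp)⟩
      intro e he
      rcases List.mem_append.mp he with h' | h'
      · exact hu e h'
      · simp only [List.mem_singleton] at h'; subst h'; exact hga ▸ hc
    | cons x t' =>
      simp only [List.cons_append, List.cons.injEq] at heq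
      obtain ⟨rfl, rfl⟩ := heq
      refine ⟨u, t' ++ β :: α :: q, by simp, hu, ?_⟩
      exact Relation.ReflTransGen.single ⟨u ++ t', q, α, β, hc, by simp, by simp⟩
  · -- u = p ++ t, α :: β :: q = t ++ γ :: v
    subst hut
    cases t with
    | nil =>
      simp only [List.nil_append, List.cons.injEq] at heq
      obtain ⟨hag, rfl⟩ := heq
      refine ⟨p ++ [β], q, by simp [hag], ?_, wp_of_eq (by simp)⟩
      intro e he
      rcases List.mem_append.mp he with h' | h'
      · exact hu e (by simp [h'])
      · simp only [List.mem_singleton] at h'; subst h'; exact hag ▸ hc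
    | cons x t'' =>
      cases t'' with
      | nil =>
        simp only [List.cons_append, List.nil_append, List.cons.injEq] at heq
        obtain ⟨rfl, hbg, rfl⟩ := heq
        refine ⟨p, α :: q, by simp [hbg], fun e he => hu e (by simp [he]), wp_of_eq (by simp)⟩
      | cons y t' =>
        simp only [List.cons_append, List.cons.injEq] at heq
        obtain ⟨rfl, rfl, rfl⟩ := heq
        refine ⟨p ++ β :: α :: t', v, by simp, ?_, ?_⟩
        · intro e he
          apply hu e
          simp only [List.mem_append, List.mem_cons] at he ⊢
          tauto
        · exact Relation.ReflTransGen.single ⟨p, t' ++ v, α, β, hc, by simp, by simp⟩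

theorem track (hsym : Symmetric adj) {γ : Γ} {a z : List Γ}
    (h : WordPerm adj (γ :: a) z) :
    ∃ u v, z = u ++ γ :: v ∧ (∀ δ ∈ u, RACommutes adj γ δ) ∧ WordPerm adj a (u ++ v) := by
  induction h with
  | refl => exact ⟨[], a, rfl, by simp, .refl⟩
  | tail _ hstep ih =>
    obtain ⟨u, v, hz, hu, hw⟩ := ih
    obtain ⟨u₂, v₂, h2, hu2, hw2⟩ := track_step hsym hstep hz hu
    exact ⟨u₂, v₂, h2, hu2, hw.trans hw2⟩

theorem wp_cancel (hsym : Symmetric adj) {γ : Γ} {a b : List Γ}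
    (h : WordPerm adj (γ :: a) (γ :: b)) : WordPerm adj a b := by
  obtain ⟨u, v, hz, hu, hw⟩ := track hsym h
  match u, hz, hu with
  | [], hz, _ =>
    obtain rfl : b = v := by simpa using hz
    exact hw
  | x :: u', hz, hu =>
    obtain ⟨rfl, -⟩ : γ = x ∧ b = u' ++ γ :: v := by simpa using hz
    exact absurd (hu γ (by simp)).1 (by simp)

/-- A reducibility pattern is preserved by one swap. -/
theorem pat_step (hsym : Symmetric adj) {z z₂ : List Γ} (hs : SwapStep adj z z₂)
    {γ : Γ} {u v x : List Γ} (hz : z = u ++ γ :: (v ++ γ :: x))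
    (hv : ∀ δ ∈ v, RACommutes adj γ δ) :
    ∃ u₂ v₂ x₂, z₂ = u₂ ++ γ :: (v₂ ++ γ :: x₂) ∧ ∀ δ ∈ v₂, RACommutes adj γ δ := by
  obtain ⟨p, q, α, β, hc, h1, h2⟩ := hs
  rw [hz] at h1
  subst h2
  rcases List.append_eq_append_iff.mp h1 with ⟨t, hpt, heq⟩ | ⟨t, hut, heq⟩
  · -- p = u ++ t, γ :: (v ++ γ :: x) = t ++ α :: β :: q
    subst hpt
    cases t with
    | nil =>
      simp only [List.nil_append, List.cons.injEq] at heq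
      obtain ⟨hga, heq2⟩ := heq
      cases v with
      | nil =>
        simp only [List.nil_append, List.cons.injEq] at heq2
        obtain ⟨hgb, rfl⟩ := heq2
        exact absurd (hga ▸ hgb ▸ hc).1 (by simp)
      | cons d v' =>
        simp only [List.cons_append, List.cons.injEq] at heq2
        obtain ⟨rfl, rfl⟩ := heq2
        exact ⟨u ++ [d], v', x, by simp [hga], fun e he => hv e (by simp [he])⟩
    | cons c t'' =>
      simp only [List.cons_append, List.cons.injEq] at heq
      obtain ⟨rfl, heq2⟩ := heq
      -- v ++ γ :: x = t'' ++ α :: β :: q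
      rcases List.append_eq_append_iff.mp heq2 with ⟨d, htd, heq3⟩ | ⟨e, hve, heq3⟩
      · -- t'' = v ++ d, γ :: x = d ++ α :: β :: q
        subst htd
        cases d with
        | nil =>
          simp only [List.nil_append, List.cons.injEq] at heq3
          obtain ⟨hga, rfl⟩ := heq3
          refine ⟨u, v ++ [β], q, by simp [hga], ?_⟩
          intro e he
          rcases List.mem_append.mp he with h' | h'
          · exact hv e h'
          · simp only [List.mem_singleton] at h'; subst h'; exact hga ▸ hc
        | cons c' d' =>
          simp only [List.cons_append, List.cons.injEq] at heq3
          obtain ⟨rfl, rfl⟩ := heq3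
          exact ⟨u, v, d' ++ β :: α :: q, by simp, hv⟩
      · -- v = t'' ++ e, α :: β :: q = e ++ γ :: x
        subst hve
        cases e with
        | nil =>
          simp only [List.nil_append, List.cons.injEq] at heq3
          obtain ⟨hag, rfl⟩ := heq3
          refine ⟨u, t'' ++ [β], q, by simp [hag], ?_⟩
          intro e he
          rcases List.mem_append.mp he with h' | h'
          · exact hv e (by simp [h'])
          · simp only [List.mem_singleton] at h'; subst h'; exact hag ▸ hc
        | cons y e'' =>
          cases e'' with
          | nil =>
            simp only [List.cons_append, List.nil_append, List.cons.injEq] at heq3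
            obtain ⟨rfl, hbg, rfl⟩ := heq3
            exact ⟨u, t'', α :: q, by simp [hbg], fun e he => hv e (by simp [he])⟩
          | cons y' e' =>
            simp only [List.cons_append, List.cons.injEq] at heq3
            obtain ⟨rfl, rfl, rfl⟩ := heq3
            refine ⟨u, t'' ++ β :: α :: e', x, by simp, ?_⟩
            intro e he
            apply hv e
            simp only [List.mem_append, List.mem_cons] at he ⊢
            tauto
  · -- u = p ++ t, α :: β :: q = t ++ γ :: (v ++ γ :: x)
    subst hut
    cases t with
    | nil =>
      simp only [List.nil_append, List.cons.injEq] at heq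
      obtain ⟨hag, heq2⟩ := heq
      cases v with
      | nil =>
        simp only [List.nil_append, List.cons.injEq] at heq2
        obtain ⟨hbg, rfl⟩ := heq2
        exact absurd (hag ▸ hbg ▸ hc).1 (by simp)
      | cons d v' =>
        simp only [List.cons_append, List.cons.injEq] at heq2
        obtain ⟨rfl, rfl⟩ := heq2
        exact ⟨p ++ [β], v', x, by simp [hag], fun e he => hv e (by simp [he])⟩
    | cons c t'' =>
      cases t'' with
      | nil =>
        simp only [List.cons_append, List.nil_append, List.cons.injEq] at heq
        obtain ⟨rfl, hbg, rfl⟩ := heq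
        exact ⟨p, α :: v, x, by simp [hbg], fun e he => by
          rcases List.mem_cons.mp he with h' | h'
          · subst h'; exact rac_symm hsym (hbg ▸ hc)
          · exact hv e h'⟩
      | cons y t' =>
        simp only [List.cons_append, List.cons.injEq] at heq
        obtain ⟨rfl, rfl, rfl⟩ := heq
        exact ⟨p ++ β :: α :: t', v, x, by simp, hv⟩

theorem red_wp (hsym : Symmetric adj) {z z₂ : List Γ} (h : WordPerm adj z z₂)
    (hz : GIsReduced adj z) : GIsReduced adj z₂ := by
  induction h with
  | refl => exact hz
  | tail _ hstep ih =>
    rintro ⟨u, v, x, γ, h2, hv⟩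
    obtain ⟨u₂, v₂, x₂, h3, hv2⟩ := pat_step hsym (swapStep_symm hsym hstep) h2 hv
    exact ih ⟨u₂, v₂, x₂, γ, h3, hv2⟩

theorem red_nil : GIsReduced adj [] := by
  rintro ⟨u, v, x, γ, h, -⟩
  simp at h

theorem red_tail {γ : Γ} {w : List Γ} (h : GIsReduced adj (γ :: w)) : GIsReduced adj w := by
  rintro ⟨u, v, x, δ, hw, hv⟩
  exact h ⟨γ :: u, v, x, δ, by simp [hw], hv⟩

theorem red_cons (hsym : Symmetric adj) {γ : Γ} {w : List Γ} (hw : GIsReduced adj w)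
    (hnc : ¬∃ w', WordPerm adj w (γ :: w')) : GIsReduced adj (γ :: w) := by
  rintro ⟨u, v, x, δ, heq, hv⟩
  cases u with
  | nil =>
    simp only [List.nil_append, List.cons.injEq] at heq
    obtain ⟨rfl, rfl⟩ := heq
    exact hnc ⟨v ++ x, wp_bubble hsym hv⟩
  | cons y u' =>
    simp only [List.cons_append, List.cons.injEq] at heq
    obtain ⟨rfl, rfl⟩ := heq
    exact hw ⟨u', v, x, δ, rfl, hv⟩

theorem not_can_of_red_cons (hsym : Symmetric adj) {γ : Γ} {w : List Γ}
    (h : GIsReduced adj (γ :: w)) : ¬∃ w', WordPerm adj w (γ :: w') := by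
  rintro ⟨w', hw'⟩
  have h1 : WordPerm adj (γ :: w) (γ :: γ :: w') := wp_cons γ hw'
  exact red_wp hsym h1 h ⟨[], [], w', γ, rfl, by simp⟩

theorem can_of_can_cons (hsym : Symmetric adj) {γ δ : Γ} {w : List Γ} (hne : γ ≠ δ)
    (h : ∃ w', WordPerm adj (δ :: w) (γ :: w')) :
    ∃ w'', WordPerm adj w (γ :: w'') := by
  obtain ⟨w', hw'⟩ := h
  obtain ⟨u, v, heq, hu, -⟩ := track hsym (wp_symm hsym hw')
  cases u with
  | nil =>
    simp only [List.nil_append, List.cons.injEq] at heq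
    exact absurd heq.1 hne.symm
  | cons y u' =>
    simp only [List.cons_append, List.cons.injEq] at heq
    obtain ⟨rfl, rfl⟩ := heq
    exact ⟨u' ++ v, wp_bubble hsym (fun e he => hu e (by simp [he]))⟩

/-! ### The quotient of reduced words and the action of generators -/

variable (adj) in
def Red := {w : List Γ // GIsReduced adj w}

variable (adj) in
def rrel (a b : Red adj) : Prop := WordPerm adj a.1 b.1

variable (adj) in
def Q := Quot (rrel adj)

variable (adj) in
open Classical in
noncomputable def sig (γ : Γ) (w : List Γ) : List Γ :=
  if h : ∃ w', WordPerm adj w (γ :: w') then h.choose else γ :: w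

theorem sig_pos {γ : Γ} {w : List Γ} (h : ∃ w', WordPerm adj w (γ :: w')) :
    WordPerm adj w (γ :: sig adj γ w) := by
  classical rw [sig, dif_pos h]; exact h.choose_spec

theorem sig_neg {γ : Γ} {w : List Γ} (h : ¬∃ w', WordPerm adj w (γ :: w')) :
    sig adj γ w = γ :: w := by classical rw [sig, dif_neg h]

theorem sig_red (hsym : Symmetric adj) {γ : Γ} {w : List Γ} (hw : GIsReduced adj w) :
    GIsReduced adj (sig adj γ w) := by
  by_cases h : ∃ w', WordPerm adj w (γ :: w')
  · exact red_tail (red_wp hsym (sig_pos h) hw)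
  · rw [sig_neg h]; exact red_cons hsym hw h

theorem sig_wp (hsym : Symmetric adj) {γ : Γ} {w w₂ : List Γ} (h : WordPerm adj w w₂) :
    WordPerm adj (sig adj γ w) (sig adj γ w₂) := by
  by_cases h1 : ∃ w', WordPerm adj w (γ :: w')
  · have h2 : ∃ w', WordPerm adj w₂ (γ :: w') :=
      ⟨sig adj γ w, (wp_symm hsym h).trans (sig_pos h1)⟩
    exact wp_cancel hsym ((wp_symm hsym (sig_pos h1)).trans (h.trans (sig_pos h2)))
  · have h2 : ¬∃ w', WordPerm adj w₂ (γ :: w') := fun ⟨c, hc⟩ => h1 ⟨c, h.trans hc⟩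
    rw [sig_neg h1, sig_neg h2]
    exact wp_cons γ h

variable (adj) in
noncomputable def sigQ (hsym : Symmetric adj) (γ : Γ) : Q adj → Q adj :=
  Quot.lift (fun a => Quot.mk _ (⟨sig adj γ a.1, sig_red hsym a.2⟩ : Red adj))
    (fun _ _ hab => Quot.sound (sig_wp hsym hab))

theorem sigQ_invol (hsym : Symmetric adj) (γ : Γ) :
    Function.Involutive (sigQ adj hsym γ) := by
  intro q
  induction q using Quot.ind with | _ a =>
  refine Quot.sound (?_ : WordPerm adj (sig adj γ (sig adj γ a.1)) a.1)
  by_cases h : ∃ w', WordPerm adj a.1 (γ :: w')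
  · have hs : WordPerm adj a.1 (γ :: sig adj γ a.1) := sig_pos h
    have hsr : GIsReduced adj (γ :: sig adj γ a.1) := red_wp hsym hs a.2
    rw [sig_neg (not_can_of_red_cons hsym hsr)]
    exact wp_symm hsym hs
  · rw [sig_neg h]
    have h2 : ∃ w', WordPerm adj (γ :: a.1) (γ :: w') := ⟨a.1, .refl⟩
    exact wp_symm hsym (wp_cancel hsym (sig_pos h2))

theorem sig_comm_aux (hsym : Symmetric adj) {γ δ : Γ} (hc : RACommutes adj γ δ)
    {w : List Γ} (hg : ∃ w', WordPerm adj w (γ :: w'))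
    (hd : ¬∃ w', WordPerm adj w (δ :: w')) :
    WordPerm adj (sig adj γ (sig adj δ w)) (sig adj δ (sig adj γ w)) := by
  have hs1 : WordPerm adj w (γ :: sig adj γ w) := sig_pos hg
  -- δ does not cancel in sig γ w
  have hnd : ¬∃ t, WordPerm adj (sig adj γ w) (δ :: t) := by
    rintro ⟨t, ht⟩
    refine hd ⟨γ :: t, hs1.trans ((wp_cons γ ht).trans ?_)⟩
    exact Relation.ReflTransGen.single ⟨[], t, γ, δ, hc, rfl, rfl⟩
  rw [sig_neg hd, sig_neg hnd]
  -- γ cancels in δ :: w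
  have hg2 : ∃ t, WordPerm adj (δ :: w) (γ :: t) := by
    refine ⟨δ :: sig adj γ w, (wp_cons δ hs1).trans ?_⟩
    exact Relation.ReflTransGen.single ⟨[], sig adj γ w, δ, γ, rac_symm hsym hc, rfl, rfl⟩
  have h3 : WordPerm adj (δ :: w) (γ :: sig adj γ (δ :: w)) := sig_pos hg2
  have h4 : WordPerm adj (γ :: δ :: sig adj γ w) (γ :: sig adj γ (δ :: w)) := by
    refine Relation.ReflTransGen.trans ?_ h3
    refine (Relation.ReflTransGen.single ⟨[], sig adj γ w, γ, δ, hc, rfl, rfl⟩).trans ?_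
    exact wp_cons δ (wp_symm hsym hs1)
  exact wp_symm hsym (wp_cancel hsym h4)

theorem sigQ_comm (hsym : Symmetric adj) {γ δ : Γ} (hc : RACommutes adj γ δ)
    (q : Q adj) : sigQ adj hsym γ (sigQ adj hsym δ q) = sigQ adj hsym δ (sigQ adj hsym γ q) := by
  induction q using Quot.ind with | _ a =>
  refine Quot.sound (?_ : WordPerm adj (sig adj γ (sig adj δ a.1)) (sig adj δ (sig adj γ a.1)))
  by_cases hg : ∃ w', WordPerm adj a.1 (γ :: w') <;>
    by_cases hd : ∃ w', WordPerm adj a.1 (δ :: w')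
  · -- both cancel
    have hs1 : WordPerm adj a.1 (γ :: sig adj γ a.1) := sig_pos hg
    have hs2 : WordPerm adj a.1 (δ :: sig adj δ a.1) := sig_pos hd
    have hcd : ∃ t, WordPerm adj (sig adj γ a.1) (δ :: t) :=
      can_of_can_cons hsym hc.1.symm ⟨sig adj δ a.1, (wp_symm hsym hs1).trans hs2⟩
    have hcg : ∃ t, WordPerm adj (sig adj δ a.1) (γ :: t) :=
      can_of_can_cons hsym hc.1 ⟨sig adj γ a.1, (wp_symm hsym hs2).trans hs1⟩
    have e1 : WordPerm adj a.1 (γ :: δ :: sig adj δ (sig adj γ a.1)) :=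
      hs1.trans (wp_cons γ (sig_pos hcd))
    have e2 : WordPerm adj a.1 (γ :: δ :: sig adj γ (sig adj δ a.1)) := by
      refine (hs2.trans (wp_cons δ (sig_pos hcg))).trans ?_
      exact Relation.ReflTransGen.single
        ⟨[], sig adj γ (sig adj δ a.1), δ, γ, rac_symm hsym hc, rfl, rfl⟩
    exact wp_cancel hsym (wp_cancel hsym ((wp_symm hsym e2).trans e1))
  · exact sig_comm_aux hsym hc hg hd
  · exact wp_symm hsym (sig_comm_aux hsym (rac_symm hsym hc) hd hg)
  · -- neither cancels
    have hnd : ¬∃ t, WordPerm adj (δ :: a.1) (γ :: t) := fun h =>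
      hg (can_of_can_cons hsym hc.1 h)
    have hng : ¬∃ t, WordPerm adj (γ :: a.1) (δ :: t) := fun h =>
      hd (can_of_can_cons hsym hc.1.symm h)
    rw [sig_neg hd, sig_neg hg, sig_neg hnd, sig_neg hng]
    exact Relation.ReflTransGen.single ⟨[], a.1, γ, δ, hc, rfl, rfl⟩


/-! ### Group-theoretic lemmas -/

theorem of_mul_of_comm {γ δ : Γ} (h : RACommutes adj γ δ) :
    (PresentedGroup.of (rels := coxRels adj) γ) * PresentedGroup.of δ =
      PresentedGroup.of δ * PresentedGroup.of γ := by
  have hmem : FreeGroup.of γ * FreeGroup.of δ * (FreeGroup.of γ)⁻¹ * (FreeGroup.of δ)⁻¹ ∈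
      Subgroup.normalClosure (coxRels adj) :=
    Subgroup.subset_normalClosure (Or.inr ⟨γ, δ, h, rfl⟩)
  have h2 : (PresentedGroup.of (rels := coxRels adj) γ) * PresentedGroup.of δ *
      (PresentedGroup.of γ)⁻¹ * (PresentedGroup.of δ)⁻¹ = 1 := by
    have h1 := (QuotientGroup.eq_one_iff
      (FreeGroup.of γ * FreeGroup.of δ * (FreeGroup.of γ)⁻¹ * (FreeGroup.of δ)⁻¹)).mpr hmem
    simp only [QuotientGroup.mk_mul, QuotientGroup.mk_inv] at h1
    exact h1
  calc (PresentedGroup.of (rels := coxRels adj) γ) * PresentedGroup.of δ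
      = ((PresentedGroup.of (rels := coxRels adj) γ) * PresentedGroup.of δ *
          (PresentedGroup.of γ)⁻¹ * (PresentedGroup.of δ)⁻¹) *
        (PresentedGroup.of δ * PresentedGroup.of γ) := by group
    _ = PresentedGroup.of δ * PresentedGroup.of γ := by rw [h2, one_mul]

theorem evalWord_nil : evalWord adj [] = 1 := rfl

theorem evalWord_cons (γ : Γ) (w : List Γ) :
    evalWord adj (γ :: w) = PresentedGroup.of γ * evalWord adj w := by
  simp [evalWord]

theorem evalWord_append (u v : List Γ) :
    evalWord adj (u ++ v) = evalWord adj u * evalWord adj v := by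
  simp [evalWord]

theorem eval_swap {w w' : List Γ} (h : SwapStep adj w w') :
    evalWord adj w = evalWord adj w' := by
  obtain ⟨u, v, γ, δ, hc, rfl, rfl⟩ := h
  rw [evalWord_append, evalWord_append]
  congr 1
  simp only [evalWord_cons, ← mul_assoc]
  rw [of_mul_of_comm hc]

theorem eval_wp {w w' : List Γ} (h : WordPerm adj w w') :
    evalWord adj w = evalWord adj w' := by
  induction h with
  | refl => rfl
  | tail _ hstep ih => exact ih.trans (eval_swap hstep)

variable (adj) in
noncomputable def fPerm (hsym : Symmetric adj) (γ : Γ) : Equiv.Perm (Q adj) :=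
  Function.Involutive.toPerm (sigQ adj hsym γ) (sigQ_invol hsym γ)

theorem fPerm_sq (hsym : Symmetric adj) (γ : Γ) :
    fPerm adj hsym γ * fPerm adj hsym γ = 1 := by
  ext q
  simp [fPerm, Equiv.Perm.mul_apply, Function.Involutive.coe_toPerm, sigQ_invol hsym γ q]

theorem rels_hold (hsym : Symmetric adj) :
    ∀ r ∈ coxRels adj, FreeGroup.lift (fPerm adj hsym) r = 1 := by
  rintro r (⟨γ, rfl⟩ | ⟨γ, δ, hc, rfl⟩)
  · simp only [map_mul, FreeGroup.lift_apply_of]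
    exact fPerm_sq hsym γ
  · simp only [map_mul, map_inv, FreeGroup.lift_apply_of]
    rw [inv_eq_of_mul_eq_one_right (fPerm_sq hsym γ),
      inv_eq_of_mul_eq_one_right (fPerm_sq hsym δ)]
    ext q
    simp only [Equiv.Perm.mul_apply, Equiv.Perm.one_apply, fPerm,
      Function.Involutive.coe_toPerm]
    rw [sigQ_comm hsym hc (sigQ adj hsym γ (sigQ adj hsym δ q)),
      sigQ_invol hsym γ (sigQ adj hsym δ q), sigQ_invol hsym δ q]

variable (adj) in
noncomputable def phi (hsym : Symmetric adj) :
    PresentedGroup (coxRels adj) →* Equiv.Perm (Q adj) :=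
  PresentedGroup.toGroup (rels_hold hsym)

theorem phi_of (hsym : Symmetric adj) (γ : Γ) :
    phi adj hsym (PresentedGroup.of γ) = fPerm adj hsym γ :=
  PresentedGroup.toGroup.of _

theorem phi_eval (hsym : Symmetric adj) (w : List Γ) (hw : GIsReduced adj w) :
    phi adj hsym (evalWord adj w) (Quot.mk (rrel adj) ⟨[], red_nil⟩) =
      Quot.mk (rrel adj) ⟨w, hw⟩ := by
  induction w with
  | nil => rw [evalWord_nil, map_one]; rfl
  | cons γ t ih =>
    have ht := red_tail hw
    rw [evalWord_cons, map_mul]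
    erw [Equiv.Perm.mul_apply, ih ht, phi_of]
    have hkey : WordPerm adj (sig adj γ t) (γ :: t) := by
      rw [sig_neg (not_can_of_red_cons hsym hw)]
      exact .refl
    exact Quot.sound hkey

theorem q_exact (hsym : Symmetric adj) {a b : Red adj}
    (h : Quot.mk (rrel adj) a = Quot.mk (rrel adj) b) : WordPerm adj a.1 b.1 := by
  have h2 := Quot.eqvGen_exact h
  clear h
  induction h2 with
  | rel x y hxy => exact hxy
  | refl x => exact .refl
  | symm x y _ ih => exact wp_symm hsym ih
  | trans x y z _ _ ih1 ih2 => exact ih1.trans ih2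

end RACG

/-- In a right-angled Coxeter group, two reduced words represent the same group
element iff one is a permutation of the other by swaps of adjacent commuting
generators. -/
theorem reduced_words_equal_iff_perm [Fintype Γ]
    (adj : Γ → Γ → Prop) (hsym : Symmetric adj) (hirr : Irreflexive adj)
    (u v : List Γ) (hu : GIsReduced adj u) (hv : GIsReduced adj v) :
    evalWord adj u = evalWord adj v ↔ WordPerm adj u v := by
  constructor
  · intro h
    have h1 := RACG.phi_eval hsym u hu
    have h2 := RACG.phi_eval hsym v hv
    rw [h] at h1
    exact RACG.q_exact hsym (h1.symm.trans h2)
  · intro h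
    exact RACG.eval_wp h
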